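/- Let (X, X̃) be a Cauchy pair on V with eigenvalues x_i of X and x̃_i of X̃, and let α_i = tr(E_i(X - X̃)) where E_i is the primitive idempotent of X for x_i. Then for every j, ∑_i α_i/(x_i - x̃_j) = 1. -/

import Mathlib

def IsCauchyPair (K V : Type*) [Field K] [AddCommGroup V] [Module K V]
    (X Xt : Module.End K V) : Prop :=
  (⨆ μ : K, X.eigenspace μ) = ⊤ ∧
  (⨆ μ : K, Xt.eigenspace μ) = ⊤ ∧
  Module.rank K (LinearMap.range (X - Xt)) = 1 ∧
  ∀ W : Submodule K V, W.map (X : V →ₗ[K] V) ≤ W → W.map (Xt : V →ₗ[K] V) ≤ W →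
    W = ⊥ ∨ W = ⊤

theorem stmt13 {K V : Type*} [Field K] [AddCommGroup V] [Module K V] [FiniteDimensional K V]
    {n : ℕ} {X Xt : Module.End K V} (h : IsCauchyPair K V X Xt)
    (x : Fin n → K) (hxinj : Function.Injective x)
    (hxeig : ∀ i, X.HasEigenvalue (x i))
    (hxall : ∀ μ : K, X.HasEigenvalue μ → ∃ i, x i = μ)
    (xt : Fin n → K) (hxtinj : Function.Injective xt)
    (hxteig : ∀ i, Xt.HasEigenvalue (xt i))
    (hxtall : ∀ μ : K, Xt.HasEigenvalue μ → ∃ i, xt i = μ)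
    (E : Fin n → Module.End K V)
    (hE1 : ∀ i, ∀ u ∈ X.eigenspace (x i), E i u = u)
    (hE0 : ∀ i j, i ≠ j → ∀ u ∈ X.eigenspace (x j), E i u = 0) :
    ∀ j, ∑ i, (LinearMap.trace K V (E i * (X - Xt))) / (x i - xt j) = 1 := by
  obtain ⟨hXd, hXtd, hrank, hirr⟩ := h
  -- vanishing principle: a map killing every eigenspace of X is zero
  have hkey : ∀ S : Module.End K V, (∀ μ : K, ∀ v ∈ X.eigenspace μ, S v = 0) →
      ∀ v : V, S v = 0 := by
    intro S hS v
    have hle : (⨆ μ : K, X.eigenspace μ) ≤ LinearMap.ker S :=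
      iSup_le fun μ u hu => LinearMap.mem_ker.mpr (hS μ u hu)
    exact LinearMap.mem_ker.mp (hle (hXd ▸ Submodule.mem_top))
  -- non-eigenvalues have trivial eigenspace
  have hzero : ∀ (μ : K), (¬ ∃ k, x k = μ) → ∀ u ∈ X.eigenspace μ, u = 0 := by
    intro μ hμ u hu
    have hne : ¬ X.HasEigenvalue μ := fun hev => hμ (hxall μ hev)
    have h0 : X.eigenspace μ = ⊥ := not_not.mp fun hb => hne hb
    simpa [h0] using hu
  -- E i v lies in the eigenspace of x i
  have hmem : ∀ i (v : V), E i v ∈ X.eigenspace (x i) := by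
    intro i v
    rw [Module.End.mem_eigenspace_iff]
    have hv := hkey (X * E i - x i • E i) ?_ v
    · have h0 : X (E i v) - x i • E i v = 0 := by
        simpa [LinearMap.sub_apply, Module.End.mul_apply, LinearMap.smul_apply] using hv
      exact sub_eq_zero.mp h0
    · intro μ u hu
      simp only [LinearMap.sub_apply, Module.End.mul_apply, LinearMap.smul_apply]
      by_cases hμ : ∃ k, x k = μ
      · obtain ⟨k, rfl⟩ := hμ
        by_cases hik : i = k
        · subst hik
          rw [hE1 i u hu, Module.End.mem_eigenspace_iff.mp hu, sub_self]
        · rw [hE0 i k hik u hu]; simp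
      · rw [hzero μ hμ u hu]; simp
  -- E i ∘ X = x i • E i
  have hEX : ∀ i (v : V), E i (X v) = x i • E i v := by
    intro i v
    have hv := hkey (E i * X - x i • E i) ?_ v
    · have h0 : E i (X v) - x i • E i v = 0 := by
        simpa [LinearMap.sub_apply, Module.End.mul_apply, LinearMap.smul_apply] using hv
      exact sub_eq_zero.mp h0
    · intro μ u hu
      simp only [LinearMap.sub_apply, Module.End.mul_apply, LinearMap.smul_apply]
      rw [Module.End.mem_eigenspace_iff.mp hu, map_smul]
      by_cases hμ : ∃ k, x k = μ
      · obtain ⟨k, rfl⟩ := hμ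
        by_cases hik : i = k
        · subst hik; rw [sub_self]
        · rw [hE0 i k hik u hu]; simp
      · rw [hzero μ hμ u hu]; simp
  -- the E i sum to the identity
  have hsum : ∀ v : V, ∑ i, E i v = v := by
    intro v
    have hv := hkey ((∑ i, E i) - 1) ?_ v
    · have h0 : (∑ i, E i) v - v = 0 := by
        simpa [LinearMap.sub_apply] using hv
      have h1 : (∑ i, E i) v = ∑ i, E i v := by
        simp [LinearMap.sum_apply]
      rw [h1] at h0
      exact sub_eq_zero.mp h0
    · intro μ u hu
      simp only [LinearMap.sub_apply, Module.End.one_apply, LinearMap.sum_apply]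
      by_cases hμ : ∃ k, x k = μ
      · obtain ⟨k, rfl⟩ := hμ
        have : ∑ i, E i u = u := by
          rw [Finset.sum_eq_single k]
          · exact hE1 k u hu
          · intro i _ hik; exact hE0 i k hik u hu
          · intro hk; exact absurd (Finset.mem_univ k) hk
        rw [this, sub_self]
      · rw [hzero μ hμ u hu]; simp
  -- rank-one decomposition X - Xt = ξ ⊗ f
  obtain ⟨ξ', hξ'0, hsp⟩ := rank_eq_one_iff.mp hrank
  set ξ : V := (ξ' : V) with hξdef
  have hξ : ξ ≠ 0 := fun h0 => hξ'0 (Subtype.ext h0)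
  have hinj : Function.Injective (LinearMap.toSpanSingleton K (LinearMap.range (X - Xt)) ξ') := by
    rw [← LinearMap.ker_eq_bot]
    exact LinearMap.ker_toSpanSingleton K hξ'0
  have hsurj : Function.Surjective (LinearMap.toSpanSingleton K (LinearMap.range (X - Xt)) ξ') := by
    intro w
    obtain ⟨r, hr⟩ := hsp w
    exact ⟨r, by simpa [LinearMap.toSpanSingleton_apply] using hr⟩
  set e : K ≃ₗ[K] LinearMap.range (X - Xt) :=
    LinearEquiv.ofBijective _ ⟨hinj, hsurj⟩ with he
  set f : V →ₗ[K] K := (e.symm : LinearMap.range (X - Xt) →ₗ[K] K) ∘ₗ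
    (X - Xt).rangeRestrict with hfdef
  have hf : ∀ v : V, (X - Xt) v = f v • ξ := by
    intro v
    have h2 : e (f v) = (X - Xt).rangeRestrict v := by
      simp [hfdef, LinearMap.comp_apply]
    have h3 := congrArg (Subtype.val) h2
    have h4 : (e (f v) : V) = f v • ξ := by
      rfl
    rw [h4] at h3
    simpa using h3.symm
  -- no common eigenvectors: f is nonzero on eigenvectors of X
  have hone : ∀ (w : V) (μ : K), w ≠ 0 → f w = 0 → X w = μ • w → False := by
    intro w μ hw hfw hXw
    have hDw : (X - Xt) w = 0 := by rw [hf w, hfw, zero_smul]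
    set W : Submodule K V := Submodule.span K {w} with hW
    have hXW : W.map (X : V →ₗ[K] V) ≤ W := by
      rw [Submodule.map_le_iff_le_comap]
      intro v hv
      obtain ⟨c, rfl⟩ := Submodule.mem_span_singleton.mp hv
      refine Submodule.mem_comap.mpr (Submodule.mem_span_singleton.mpr ⟨c * μ, ?_⟩)
      rw [map_smul, hXw, smul_smul]
    have hXtw0 : Xt w = μ • w := by
      have h5 : X w = Xt w := by
        have h6 := hDw
        rwa [LinearMap.sub_apply, sub_eq_zero] at h6
      rw [← h5, hXw]
    have hXtW : W.map (Xt : V →ₗ[K] V) ≤ W := by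
      rw [Submodule.map_le_iff_le_comap]
      intro v hv
      obtain ⟨c, rfl⟩ := Submodule.mem_span_singleton.mp hv
      refine Submodule.mem_comap.mpr (Submodule.mem_span_singleton.mpr ⟨c * μ, ?_⟩)
      rw [map_smul, hXtw0, smul_smul]
    rcases hirr W hXW hXtW with hb | ht
    · have hmw : w ∈ W := Submodule.mem_span_singleton_self w
      rw [hb] at hmw
      exact hw ((Submodule.mem_bot K).mp hmw)
    · have hD0 : ∀ v : V, (X - Xt) v = 0 := by
        intro v
        have hv : v ∈ W := ht ▸ Submodule.mem_top
        obtain ⟨d, rfl⟩ := Submodule.mem_span_singleton.mp hv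
        rw [map_smul, hDw, smul_zero]
      obtain ⟨z, hz⟩ := LinearMap.mem_range.mp ξ'.2
      have hz0 : (↑ξ' : V) = 0 := by rw [← hz]; exact hD0 z
      exact hξ hz0
  -- E i ξ ≠ 0 for all i
  have hEξ : ∀ i, E i ξ ≠ 0 := by
    intro i h0
    set U : Submodule K V := ⨆ k : {k : Fin n // k ≠ i}, X.eigenspace (x k) with hU
    have hξU : ξ ∈ U := by
      rw [← hsum ξ]
      refine Submodule.sum_mem _ fun k _ => ?_
      by_cases hk : k = i
      · subst hk; rw [h0]; exact zero_mem _
      · exact Submodule.mem_iSup_of_mem ⟨k, hk⟩ (hmem k ξ)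
    have hXU : U.map (X : V →ₗ[K] V) ≤ U := by
      rw [Submodule.map_iSup]
      refine iSup_le fun k => ?_
      refine le_trans ?_ (le_iSup _ k)
      rw [Submodule.map_le_iff_le_comap]
      intro u hu
      rw [Submodule.mem_comap]
      rw [Module.End.mem_eigenspace_iff] at hu ⊢
      rw [hu, map_smul, hu]
    have hXtU : U.map (Xt : V →ₗ[K] V) ≤ U := by
      rw [Submodule.map_le_iff_le_comap]
      intro v hv
      rw [Submodule.mem_comap]
      have hXv : X v ∈ U := hXU (Submodule.mem_map_of_mem hv)
      have hXtv : Xt v = X v - f v • ξ := by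
        have h5 := hf v
        rw [LinearMap.sub_apply] at h5
        rw [← h5]; abel
      rw [hXtv]
      exact Submodule.sub_mem _ hXv (Submodule.smul_mem _ _ hξU)
    rcases hirr U hXU hXtU with hb | ht
    · rw [hb] at hξU
      exact hξ ((Submodule.mem_bot K).mp hξU)
    · have hdis := Module.End.eigenspaces_iSupIndep X (x i)
      have hUle : U ≤ ⨆ (μ : K) (_ : μ ≠ x i), X.eigenspace μ :=
        iSup_le fun k => le_iSup₂ (f := fun (μ : K) (_ : μ ≠ x i) => X.eigenspace μ)
          (x k) (fun he => k.2 (hxinj he))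
      have hd : Disjoint (X.eigenspace (x i)) U := hdis.mono_right hUle
      rw [ht] at hd
      exact hxeig i (disjoint_top.mp hd)
  -- main computation
  intro j
  obtain ⟨w, hw⟩ := (hxteig j).exists_hasEigenvector
  have hw0 : w ≠ 0 := hw.2
  have hXtw : Xt w = xt j • w := hw.apply_eq_smul
  have hfw : f w ≠ 0 := by
    intro h0
    have hDw : (X - Xt) w = 0 := by rw [hf w, h0, zero_smul]
    have hXw : X w = xt j • w := by
      have := sub_eq_zero.mp (by simpa [LinearMap.sub_apply] using hDw)
      rw [this, hXtw]
    exact hone w (xt j) hw0 h0 hXw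
  have hkeyid : ∀ i, (x i - xt j) • E i w = f w • E i ξ := by
    intro i
    have h1 : X w - xt j • w = f w • ξ := by
      have := hf w
      rw [LinearMap.sub_apply, hXtw] at this
      exact this
    have h2 := congrArg (E i) h1
    rw [map_sub, map_smul, map_smul, hEX i w] at h2
    rw [sub_smul]
    exact h2
  have hne : ∀ i, x i - xt j ≠ 0 := by
    intro i h0
    apply hEξ i
    have hk := hkeyid i
    rw [h0, zero_smul] at hk
    exact (smul_eq_zero.mp hk.symm).resolve_left hfw
  have htrace : ∀ i, LinearMap.trace K V (E i * (X - Xt)) = f (E i ξ) := by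
    intro i
    have heq : (E i * (X - Xt) : Module.End K V) = dualTensorHom K V V (f ⊗ₜ E i ξ) := by
      ext v
      simp only [Module.End.mul_apply, dualTensorHom_apply]
      rw [hf v, map_smul]
    rw [heq, LinearMap.trace_eq_contract_apply, contractLeft_apply]
  have hterm : ∀ i, f (E i ξ) / (x i - xt j) = f (E i w) / f w := by
    intro i
    have hfk := congrArg f (hkeyid i)
    rw [map_smul, map_smul, smul_eq_mul, smul_eq_mul] at hfk
    rw [div_eq_div_iff (hne i) hfw]
    linear_combination -hfk
  calc ∑ i, LinearMap.trace K V (E i * (X - Xt)) / (x i - xt j)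
      = ∑ i, f (E i w) / f w := by
        refine Finset.sum_congr rfl fun i _ => ?_
        rw [htrace i, hterm i]
    _ = (∑ i, f (E i w)) / f w := by rw [Finset.sum_div]
    _ = f (∑ i, E i w) / f w := by rw [map_sum]
    _ = f w / f w := by rw [hsum w]
    _ = 1 := div_self hfw
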